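/- For a multivariate Gaussian distribution N(0, Σ) with Σ positive definite, a permutation π of {1,...,p}, and the upper Cholesky decomposition K^π = U^π D^π (U^π)^T of the permuted inverse covariance matrix K^π (where U^π is upper unitriangular and D^π positive diagonal), the entry U^π_{jk} (j < k) is zero if and only if the conditional covariance cov(X_{π(j)}, X_{π(k)} | X_S) is zero, where S = {π(1),...,π(k-1)} \ {π(j)}. -/

import Mathlib

open Matrix

/-- the conditional covariance `cov(X_a, X_b | X_S)` of a Gaussian vector with
covariance matrix `Sig`, computed via the Schur complement:
`Σ_{ab} - Σ_{aS} (Σ_{SS})⁻¹ Σ_{Sb}`. -/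
noncomputable def condCov {p : ℕ} (Sig : Matrix (Fin p) (Fin p) ℝ)
    (a b : Fin p) (S : Finset (Fin p)) : ℝ :=
  Sig a b -
    (fun x : {x // x ∈ S} => Sig a x) ⬝ᵥ
      ((Sig.submatrix (fun x : {x // x ∈ S} => (x : Fin p))
          (fun x : {x // x ∈ S} => (x : Fin p)))⁻¹ *ᵥ
        fun y : {x // x ∈ S} => Sig (y : Fin p) b)

/-- the predecessors `{π 0, …, π (k-1)}` of position `k` in the ordering `π` -/
def predSet {p : ℕ} (π : Equiv.Perm (Fin p)) (k : Fin p) : Finset (Fin p) :=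
  (Finset.univ.filter (fun m => m < k)).image π

section aux

lemma posDef_submatrix_inj {n m : Type*} [Fintype n] [DecidableEq n] [Fintype m] [DecidableEq m]
    {M : Matrix n n ℝ} (hM : M.PosDef) {e : m → n} (he : Function.Injective e) :
    (M.submatrix e e).PosDef := by
  classical
  rw [posDef_iff_dotProduct_mulVec]
  constructor
  · show (M.submatrix e e)ᴴ = _
    rw [conjTranspose_submatrix, hM.1]
  · intro x hx
    set y : n → ℝ := fun i => if h : ∃ a, e a = i then x h.choose else 0 with hy
    have hye : ∀ a, y (e a) = x a := by
      intro a
      have h : ∃ b, e b = e a := ⟨a, rfl⟩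
      simp only [hy, dif_pos h]
      congr 1
      exact he h.choose_spec
    have hy0 : ∀ i ∉ Finset.univ.image e, y i = 0 := by
      intro i hi
      simp only [Finset.mem_image, Finset.mem_univ, true_and] at hi
      simp only [hy]
      rw [dif_neg]
      push_neg at hi ⊢
      exact hi
    have hyne : y ≠ 0 := by
      obtain ⟨a, ha⟩ := Function.ne_iff.mp hx
      intro h
      apply ha
      have := congrFun h (e a)
      rwa [hye a] at this
    have hMy : ∀ i, (M *ᵥ y) i = ∑ b, M i (e b) * x b := by
      intro i
      show ∑ j, M i j * y j = _
      rw [← Finset.sum_subset (Finset.subset_univ (Finset.univ.image e))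
        (fun j _ hj => by rw [hy0 j hj, mul_zero])]
      rw [Finset.sum_image (fun a _ b _ h => he h)]
      simp [hye]
    have key : star x ⬝ᵥ ((M.submatrix e e) *ᵥ x) = star y ⬝ᵥ (M *ᵥ y) := by
      simp only [star_trivial, dotProduct]
      rw [← Finset.sum_subset (Finset.subset_univ (Finset.univ.image e))
        (fun j _ hj => by rw [hy0 j hj, zero_mul])]
      rw [Finset.sum_image (fun a _ b _ h => he h)]
      apply Finset.sum_congr rfl
      intro a _
      rw [hye, hMy]
      simp [mulVec, dotProduct, submatrix_apply]
    rw [key]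
    exact hM.dotProduct_mulVec_pos hyne

lemma sum_subtype_le {p : ℕ} {k : Fin p} (f : Fin p → ℝ) (hf : ∀ a, k < a → f a = 0) :
    ∑ a : {m : Fin p // m ≤ k}, f ↑a = ∑ a, f a := by
  classical
  have h2 : ∑ a ∈ Finset.univ.filter (fun a => a ≤ k), f a
      = ∑ a : {m : Fin p // m ≤ k}, f ↑a :=
    Finset.sum_subtype _ (by simp) f
  rw [← h2]
  exact Finset.sum_filter_of_ne (fun x _ hx => le_of_not_gt (fun h => hx (hf x h)))

lemma entryWDW {q : Type*} [Fintype q] [DecidableEq q] (W : Matrix q q ℝ) (c : q → ℝ) (s t : q) :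
    (Wᵀ * diagonal c * W) s t = ∑ a, W a s * ((c a) * W a t) := by
  rw [Matrix.mul_apply]
  apply Finset.sum_congr rfl
  intro a _
  rw [Matrix.mul_diagonal, transpose_apply, mul_assoc]

lemma entryWDWT {q : Type*} [Fintype q] [DecidableEq q] (W : Matrix q q ℝ) (c : q → ℝ) (s t : q) :
    (W * diagonal c * Wᵀ) s t = ∑ a, W s a * ((c a) * W t a) := by
  rw [Matrix.mul_apply]
  apply Finset.sum_congr rfl
  intro a _
  rw [Matrix.mul_diagonal, transpose_apply, mul_assoc]

end aux

set_option maxHeartbeats 1600000 in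
/-- For a Gaussian `N(0, Σ)` with `Σ` positive definite, a permutation `π`, and the
upper Cholesky decomposition `K^π = U D Uᵀ` of the permuted inverse covariance
matrix `K^π = (Σ⁻¹)^π`, the entry `U j k` (for `j < k`) vanishes iff the
conditional covariance `cov(X_{π j}, X_{π k} | X_S)` vanishes, where
`S = {π 0, …, π (k-1)} \ {π j}`. -/
theorem cholesky_zero_iff_condCov_zero {p : ℕ} (Sig : Matrix (Fin p) (Fin p) ℝ)
    (hSig : Sig.PosDef) (π : Equiv.Perm (Fin p))
    (U : Matrix (Fin p) (Fin p) ℝ) (d : Fin p → ℝ)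
    (hU : U.BlockTriangular id) (hU1 : ∀ i, U i i = 1) (hd : ∀ i, 0 < d i)
    (hfac : (Sig⁻¹).submatrix π π = U * Matrix.diagonal d * Uᵀ) :
    ∀ j k : Fin p, j < k →
      (U j k = 0 ↔ condCov Sig (π j) (π k) ((predSet π k).erase (π j)) = 0) := by
  classical
  intro j k hjk
  set A : Matrix (Fin p) (Fin p) ℝ := Sig.submatrix ⇑π ⇑π with hA
  have hAinv : A⁻¹ = U * diagonal d * Uᵀ := by
    rw [hA, inv_submatrix_equiv Sig π π]
    exact hfac
  have hAPD : A.PosDef := posDef_submatrix_inj hSig π.injective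
  have hUdet : IsUnit U.det := by
    rw [det_of_upperTriangular hU]
    simp [hU1]
  set V : Matrix (Fin p) (Fin p) ℝ := U⁻¹ with hV
  have hUV : U * V = 1 := mul_nonsing_inv U hUdet
  have hVU : V * U = 1 := nonsing_inv_mul U hUdet
  have hVtri : V.BlockTriangular id := by
    haveI := U.invertibleOfIsUnitDet hUdet
    exact blockTriangular_inv_of_blockTriangular hU
  have hdne : ∀ i, d i ≠ 0 := fun i => (hd i).ne'
  have hdiaginv : (diagonal d)⁻¹ = diagonal (fun i => (d i)⁻¹) := by
    refine inv_eq_right_inv ?_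
    rw [diagonal_mul_diagonal]
    have : (fun i => d i * (d i)⁻¹) = fun _ => (1 : ℝ) := by
      funext i; exact mul_inv_cancel₀ (hdne i)
    rw [this, diagonal_one]
  have hAform : A = Vᵀ * diagonal (fun i => (d i)⁻¹) * V := by
    have h1 : A = (A⁻¹)⁻¹ := (nonsing_inv_nonsing_inv A hAPD.det_pos.ne'.isUnit).symm
    rw [h1, hAinv, Matrix.mul_inv_rev, Matrix.mul_inv_rev, Matrix.transpose_nonsing_inv,
      hdiaginv, ← hV, ← Matrix.mul_assoc]
  -- restricted matrices
  set ι : {m : Fin p // m ≤ k} → Fin p := fun a => ↑a with hι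
  set Ut := U.submatrix ι ι with hUt
  set Vt := V.submatrix ι ι with hVt
  set At := A.submatrix ι ι with hAt
  have hone : ∀ s t : {m : Fin p // m ≤ k},
      (1 : Matrix (Fin p) (Fin p) ℝ) (ι s) (ι t)
        = (1 : Matrix {m : Fin p // m ≤ k} {m : Fin p // m ≤ k} ℝ) s t := by
    intro s t
    simp only [one_apply, hι]
    by_cases h : s = t
    · subst h; simp
    · rw [if_neg h, if_neg (fun hh => h (Subtype.ext hh))]
  have hUtVt : Ut * Vt = 1 := by
    ext s t
    rw [hUt, hVt, Matrix.mul_apply]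
    have hres : ∀ a : Fin p, k < a → U (ι s) a * V a (ι t) = 0 := by
      intro a ha
      rw [hVtri (show id (ι t) < id a from lt_of_le_of_lt t.2 ha), mul_zero]
    calc ∑ a : {m : Fin p // m ≤ k}, U (ι s) (ι a) * V (ι a) (ι t)
        = ∑ a : Fin p, U (ι s) a * V a (ι t) := sum_subtype_le _ hres
      _ = (U * V) (ι s) (ι t) := (Matrix.mul_apply).symm
      _ = (1 : Matrix (Fin p) (Fin p) ℝ) (ι s) (ι t) := by rw [hUV]
      _ = _ := hone s t
  have hVtUt : Vt * Ut = 1 := mul_eq_one_comm.mp hUtVt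
  have hAtform : At = Vtᵀ * diagonal (fun a : {m : Fin p // m ≤ k} => (d ↑a)⁻¹) * Vt := by
    ext s t
    rw [entryWDW, hAt, submatrix_apply, hAform, entryWDW]
    have hres : ∀ a : Fin p, k < a → V a (ι s) * ((d a)⁻¹ * V a (ι t)) = 0 := by
      intro a ha
      rw [hVtri (show id (ι s) < id a from lt_of_le_of_lt s.2 ha), zero_mul]
    exact (sum_subtype_le _ hres).symm
  set Dt := diagonal (fun a : {m : Fin p // m ≤ k} => d ↑a) with hDt
  have hDinvDt : diagonal (fun a : {m : Fin p // m ≤ k} => (d ↑a)⁻¹) * Dt = 1 := by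
    rw [hDt, diagonal_mul_diagonal]
    have : (fun a : {m : Fin p // m ≤ k} => (d ↑a)⁻¹ * d ↑a) = fun _ => (1 : ℝ) := by
      funext a; exact inv_mul_cancel₀ (hdne ↑a)
    rw [this, diagonal_one]
  have hkey : At * (Ut * Dt * Utᵀ) = 1 := by
    rw [hAtform]
    rw [Matrix.mul_assoc (Vtᵀ * diagonal _) Vt _, Matrix.mul_assoc Ut Dt Utᵀ,
      ← Matrix.mul_assoc Vt Ut _, hVtUt, Matrix.one_mul,
      Matrix.mul_assoc Vtᵀ (diagonal _) _, ← Matrix.mul_assoc (diagonal _) Dt Utᵀ,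
      hDinvDt, Matrix.one_mul, ← Matrix.transpose_mul, hUtVt, transpose_one]
  have hAtdet : IsUnit At.det := isUnit_det_of_right_inverse hkey
  have hAtInv : At⁻¹ = Ut * Dt * Utᵀ := inv_eq_right_inv hkey
  -- the index equivalence
  set Sfin := (predSet π k).erase (π j) with hSfin
  have hmem : ∀ x : Fin p, x ∈ Sfin ↔ (π.symm x < k ∧ π.symm x ≠ j) := by
    intro x
    simp only [hSfin, Finset.mem_erase, predSet, Finset.mem_image, Finset.mem_filter,
      Finset.mem_univ, true_and]
    constructor
    · rintro ⟨hne, m, hm, rfl⟩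
      rw [Equiv.symm_apply_apply]
      exact ⟨hm, fun h => hne (by rw [h])⟩
    · rintro ⟨h1, h2⟩
      refine ⟨fun h => h2 (by rw [h, Equiv.symm_apply_apply]), π.symm x, h1, Equiv.apply_symm_apply _ _⟩
  set g : {x // x ∈ Sfin} ⊕ Fin 2 → {m : Fin p // m ≤ k} :=
    Sum.elim (fun s => ⟨π.symm ↑s, le_of_lt ((hmem ↑s).mp s.2).1⟩)
      (fun i => if i = 0 then ⟨j, hjk.le⟩ else ⟨k, le_refl k⟩) with hg
  have hgval : ∀ x, (g x : Fin p) =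
      Sum.elim (fun s : {x // x ∈ Sfin} => π.symm ↑s)
        (fun i : Fin 2 => if i = 0 then j else k) x := by
    rintro (s | i)
    · rfl
    · by_cases h : i = 0 <;> simp [hg, h]
  have hgbij : Function.Bijective g := by
    constructor
    · rintro (s | i) (t | i') h
      · have := Subtype.ext_iff.mp h
        simp only [hg, Sum.elim_inl] at this
        exact congrArg Sum.inl (Subtype.ext (π.symm.injective this))
      · exfalso
        have hv := Subtype.ext_iff.mp h
        simp only [hg, Sum.elim_inl, Sum.elim_inr] at hv
        by_cases h0 : i' = 0
        · rw [h0] at hv; simp at hv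
          exact ((hmem ↑s).mp s.2).2 hv
        · rw [if_neg h0] at hv; simp at hv
          exact absurd hv (ne_of_lt ((hmem ↑s).mp s.2).1)
      · exfalso
        have hv := Subtype.ext_iff.mp h
        simp only [hg, Sum.elim_inl, Sum.elim_inr] at hv
        by_cases h0 : i = 0
        · rw [h0] at hv; simp at hv
          exact ((hmem ↑t).mp t.2).2 hv.symm
        · rw [if_neg h0] at hv; simp at hv
          exact absurd hv.symm (ne_of_lt ((hmem ↑t).mp t.2).1)
      · have hv := Subtype.ext_iff.mp h
        simp only [hg, Sum.elim_inr] at hv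
        congr 1
        by_cases h0 : i = 0 <;> by_cases h0' : i' = 0
        · rw [h0, h0']
        · rw [if_pos h0, if_neg h0'] at hv; simp at hv; exact absurd hv (ne_of_lt hjk)
        · rw [if_neg h0, if_pos h0'] at hv; simp at hv; exact absurd hv.symm (ne_of_lt hjk)
        · omega
    · intro t
      by_cases h1 : (t : Fin p) = k
      · exact ⟨Sum.inr 1, Subtype.ext (by simp [hg]; exact h1.symm)⟩
      by_cases h2 : (t : Fin p) = j
      · exact ⟨Sum.inr 0, Subtype.ext (by simp [hg]; exact h2.symm)⟩
      · have htk : (t : Fin p) < k := lt_of_le_of_ne t.2 h1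
        have hmem' : π ↑t ∈ Sfin := (hmem _).mpr (by
          rw [Equiv.symm_apply_apply]; exact ⟨htk, h2⟩)
        exact ⟨Sum.inl ⟨π ↑t, hmem'⟩, Subtype.ext (by
          simp only [hg, Sum.elim_inl, Equiv.symm_apply_apply])⟩
  set σ := Equiv.ofBijective g hgbij with hσ
  set B := At.submatrix ⇑σ ⇑σ with hB
  have hBinv : B⁻¹ = (Ut * Dt * Utᵀ).submatrix ⇑σ ⇑σ := by
    rw [hB, inv_submatrix_equiv, hAtInv]
  have hσg : ∀ x, σ x = g x := fun _ => rfl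
  have hσval : ∀ x, (σ x : Fin p) =
      Sum.elim (fun s : {x // x ∈ Sfin} => π.symm ↑s)
        (fun i : Fin 2 => if i = 0 then j else k) x := hgval
  -- entry value
  have hZval : B⁻¹ (Sum.inr 0) (Sum.inr 1) = d k * U j k := by
    rw [hBinv, submatrix_apply, entryWDWT]
    have hj0 : (ι (σ (Sum.inr 0)) : Fin p) = j := by
      have := hσval (Sum.inr 0); simpa using this
    have hk1 : (ι (σ (Sum.inr 1)) : Fin p) = k := by
      have := hσval (Sum.inr 1); simpa using this
    have : ∀ a : {m : Fin p // m ≤ k},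
        Ut (σ (Sum.inr 0)) a * (d ↑a * Ut (σ (Sum.inr 1)) a)
        = U j ↑a * (d ↑a * U k ↑a) := by
      intro a
      rw [hUt, submatrix_apply, submatrix_apply, hj0, hk1]
    rw [Finset.sum_congr rfl (fun a _ => this a)]
    rw [Fintype.sum_eq_single (⟨k, le_refl k⟩ : {m : Fin p // m ≤ k})]
    · simp [hU1 k]; ring
    · intro b hb
      have hbk : (b : Fin p) < k := lt_of_le_of_ne b.2 (fun h => hb (Subtype.ext h))
      rw [hU (show id (↑b) < id k from hbk), mul_zero, mul_zero]
  -- blocks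
  set P := B.toBlocks₁₁ with hP
  set Q := B.toBlocks₁₂ with hQ
  set Rm := B.toBlocks₂₁ with hRm
  set Sb := B.toBlocks₂₂ with hSb
  set X := (B⁻¹).toBlocks₁₂ with hX
  set Z := (B⁻¹).toBlocks₂₂ with hZ
  have hBentry : ∀ (x y : {x // x ∈ Sfin} ⊕ Fin 2), B x y =
      Sig (Sum.elim (fun s : {x // x ∈ Sfin} => (↑s : Fin p))
        (fun i : Fin 2 => if i = 0 then π j else π k) x)
        (Sum.elim (fun s : {x // x ∈ Sfin} => (↑s : Fin p))
        (fun i : Fin 2 => if i = 0 then π j else π k) y) := by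
    have hidx : ∀ x, π (σ x : Fin p) =
        Sum.elim (fun s : {x // x ∈ Sfin} => (↑s : Fin p))
          (fun i : Fin 2 => if i = 0 then π j else π k) x := by
      rintro (s | i)
      · rw [hσval]; simp [Equiv.apply_symm_apply]
      · rw [hσval]; by_cases h : i = 0 <;> simp [h]
    intro x y
    show Sig (π (σ x : Fin p)) (π (σ y : Fin p)) = _
    rw [hidx x, hidx y]
  have hPeq : P = Sig.submatrix (fun x : {x // x ∈ Sfin} => (x : Fin p))
      (fun x : {x // x ∈ Sfin} => (x : Fin p)) := by
    ext s t
    rw [hP]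
    show B (Sum.inl s) (Sum.inl t) = _
    rw [hBentry]
    rfl
  have hPunit : IsUnit P.det := by
    rw [hPeq]
    exact (Matrix.isUnit_iff_isUnit_det _).mp
      (posDef_submatrix_inj hSig Subtype.coe_injective).isUnit
  have hPinv : P⁻¹ * P = 1 := nonsing_inv_mul _ hPunit
  have hBdet : IsUnit B.det := by
    rw [hB, det_submatrix_equiv_self]
    exact hAtdet
  have hmulBB : B * B⁻¹ = 1 := mul_nonsing_inv B hBdet
  have hblocks : P * X + Q * Z = 0 ∧ Rm * X + Sb * Z = 1 := by
    have h1 : B = fromBlocks P Q Rm Sb := (fromBlocks_toBlocks B).symm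
    have h2 : B⁻¹ = fromBlocks ((B⁻¹).toBlocks₁₁) X ((B⁻¹).toBlocks₂₁) Z :=
      (fromBlocks_toBlocks (B⁻¹)).symm
    have e : fromBlocks P Q Rm Sb * fromBlocks ((B⁻¹).toBlocks₁₁) X ((B⁻¹).toBlocks₂₁) Z = 1 := by
      rw [← h1, ← h2]; exact hmulBB
    rw [fromBlocks_multiply, ← fromBlocks_one, fromBlocks_inj] at e
    exact ⟨e.2.1, e.2.2.2⟩
  set C := Sb - Rm * P⁻¹ * Q with hC
  have hQZ : Q * Z = -(P * X) := eq_neg_of_add_eq_zero_right hblocks.1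
  have hCZ : C * Z = 1 := by
    rw [hC, Matrix.sub_mul]
    have h3 : Rm * P⁻¹ * Q * Z = -(Rm * X) := by
      rw [Matrix.mul_assoc (Rm * P⁻¹) Q Z, hQZ, Matrix.mul_neg,
        Matrix.mul_assoc Rm P⁻¹ (P * X), ← Matrix.mul_assoc P⁻¹ P X, hPinv, Matrix.one_mul]
    rw [h3, sub_neg_eq_add, add_comm]
    exact hblocks.2
  have hCinv : C⁻¹ = Z := inv_eq_right_inv hCZ
  have hCdet : C.det ≠ 0 := (isUnit_det_of_right_inverse hCZ).ne_zero
  have hZ01 : Z 0 1 = (C.det)⁻¹ * (-(C 0 1)) := by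
    rw [← hCinv, Matrix.inv_def, Matrix.adjugate_fin_two]
    simp [Ring.inverse_eq_inv]
  have hiff2 : Z 0 1 = 0 ↔ C 0 1 = 0 := by
    rw [hZ01, mul_eq_zero, neg_eq_zero, inv_eq_zero]
    simp [hCdet]
  have hZB : Z 0 1 = B⁻¹ (Sum.inr 0) (Sum.inr 1) := rfl
  have hRentry : ∀ s, Rm 0 s = Sig (π j) ↑s := fun s => by
    show B (Sum.inr 0) (Sum.inl s) = _
    rw [hBentry]
    simp
  have hQentry : ∀ t, Q t 1 = Sig ↑t (π k) := fun t => by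
    show B (Sum.inl t) (Sum.inr 1) = _
    rw [hBentry]
    simp
  have hSbentry : Sb 0 1 = Sig (π j) (π k) := by
    show B (Sum.inr 0) (Sum.inr 1) = _
    rw [hBentry]
    simp
  have hCcond : C 0 1 = condCov Sig (π j) (π k) Sfin := by
    rw [hC]
    show Sb 0 1 - (Rm * P⁻¹ * Q) 0 1 = _
    unfold condCov
    rw [hSbentry, ← hPeq]
    congr 1
    rw [Matrix.mul_assoc, Matrix.mul_apply, dotProduct]
    apply Finset.sum_congr rfl
    intro s _
    rw [hRentry s]
    congr 1
    rw [Matrix.mul_apply]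
    show _ = ∑ t, P⁻¹ s t * Sig ↑t (π k)
    apply Finset.sum_congr rfl
    intro t _
    rw [hQentry t]
  rw [← hCcond, ← hiff2, hZB, hZval]
  constructor
  · intro h; rw [h, mul_zero]
  · intro h
    rcases mul_eq_zero.mp h with h' | h'
    · exact absurd h' (hdne k)
    · exact h'
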